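/- arXiv:1010.2604 — 3 statements merged into one kernel-verified Lean document; each statement's English description precedes it below -/
import Mathlib

section
/- For any pointed item e, L_p(•(e)) = L_p(e) ∪ L(|e|), where •(·) is the point-broadcasting function. -/
namespace PointedRE

inductive PItem (α : Type) : Type
  | empty : PItem α
  | eps : PItem α
  | ch : α → PItem α
  | pch : α → PItem α
  | plus : PItem α → PItem α → PItem α
  | cat : PItem α → PItem α → PItem α
  | star : PItem α → PItem α

namespace PItem

variable {α : Type}

/-- The carrier: erase all points. -/
def carrier : PItem α → RegularExpression α
  | empty => 0
  | eps => 1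
  | ch a => RegularExpression.char a
  | pch a => RegularExpression.char a
  | plus e1 e2 => carrier e1 + carrier e2
  | cat e1 e2 => carrier e1 * carrier e2
  | star e => (carrier e).star

/-- ε(b) : {ε} if b, ∅ otherwise. -/
def ebool (b : Bool) : Language α := if b then 1 else 0

/-- The pointed language of a pointed item. -/
def Lp : PItem α → Language α
  | empty => 0
  | eps => 0
  | ch _ => 0
  | pch a => {[a]}
  | plus e1 e2 => Lp e1 + Lp e2
  | cat e1 e2 => Lp e1 * (carrier e2).matches' + Lp e2
  | star e => Lp e * KStar.kstar (carrier e).matches'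

/-- A pointed regular expression (pre): a pointed item with a trailing boolean. -/
abbrev Pre (α : Type) := PItem α × Bool

/-- The pointed language of a pre. -/
def LpP (p : Pre α) : Language α := Lp p.1 + ebool p.2

/-- Broadcasting a point inside a pointed item. -/
def broadcast : PItem α → Pre α
  | empty => (empty, false)
  | eps => (eps, true)
  | ch a => (pch a, false)
  | pch a => (pch a, false)
  | plus e1 e2 =>
      (plus (broadcast e1).1 (broadcast e2).1, (broadcast e1).2 || (broadcast e2).2)
  | cat e1 e2 =>
      if (broadcast e1).2 then
        (cat (broadcast e1).1 (broadcast e2).1, (broadcast e2).2)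
      else (cat (broadcast e1).1 e2, false)
  | star e => (star (broadcast e).1, true)

/-- Lifted sum on pres. -/
def oplus (p1 p2 : Pre α) : Pre α := (plus p1.1 p2.1, p1.2 || p2.2)

/-- Lifted concatenation on pres. -/
def odot (p1 p2 : Pre α) : Pre α :=
  if p1.2 then (cat p1.1 (broadcast p2.1).1, p2.2 || (broadcast p2.1).2)
  else (cat p1.1 p2.1, p2.2)

/-- Lifted Kleene star on pres. -/
def ostar (p : Pre α) : Pre α :=
  if p.2 then (star (broadcast p.1).1, true) else (star p.1, false)

/-- Broadcasting extended to pres. -/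
def broadcastP (p : Pre α) : Pre α :=
  ((broadcast p.1).1, p.2 || (broadcast p.1).2)

/-- The move operation on pointed items. -/
def move [DecidableEq α] (a : α) : PItem α → Pre α
  | empty => (empty, false)
  | eps => (eps, false)
  | ch b => (ch b, false)
  | pch b => if b = a then (ch b, true) else (ch b, false)
  | plus e1 e2 => oplus (move a e1) (move a e2)
  | cat e1 e2 => odot (move a e1) (move a e2)
  | star e => ostar (move a e)

/-- The move operation iterated along a string (on pres, ignoring the trailing point). -/
def moves [DecidableEq α] : Pre α → List α → Pre α
  | p, [] => p
  | p, a :: w => moves (move a p.1) w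

/-- Embedding of regular expressions as point-free pointed items. -/
def embed : RegularExpression α → PItem α
  | .zero => empty
  | .epsilon => eps
  | .char a => ch a
  | .plus e1 e2 => plus (embed e1) (embed e2)
  | .comp e1 e2 => cat (embed e1) (embed e2)
  | .star e => star (embed e)

/-- Read-back of a pointed item as a set of regular expressions. -/
def R : PItem α → Set (RegularExpression α)
  | empty => ∅
  | eps => ∅
  | ch _ => ∅
  | pch a => {RegularExpression.char a}
  | plus e1 e2 => R e1 ∪ R e2
  | cat e1 e2 => (fun r => r * carrier e2) '' R e1 ∪ R e2
  | star e => (fun r => r * (carrier e).star) '' R e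

/-- Read-back of a pre. -/
def RP (p : Pre α) : Set (RegularExpression α) :=
  R p.1 ∪ (if p.2 then {1} else ∅)

/-- The language of a set of regular expressions. -/
def LS (S : Set (RegularExpression α)) : Language α :=
  {w | ∃ r ∈ S, w ∈ r.matches'}

/-- The look-ahead normal form of a regular expression (without ε). -/
def nf : RegularExpression α → Set (RegularExpression α)
  | .zero => ∅
  | .epsilon => ∅
  | .char a => {RegularExpression.char a}
  | .plus e1 e2 => nf e1 ∪ nf e2
  | .comp e1 e2 =>
      if e1.matchEpsilon then (fun r => r * e2) '' nf e1 ∪ nf e2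
      else (fun r => r * e2) '' nf e1
  | .star e => (fun r => r * e.star) '' nf e

/-- The look-ahead normal form with ε added when the expression is nullable. -/
def nfe (e : RegularExpression α) : Set (RegularExpression α) :=
  nf e ∪ (if e.matchEpsilon then {1} else ∅)

/-- nf_ε lifted to sets of regular expressions. -/
def nfeS (S : Set (RegularExpression α)) : Set (RegularExpression α) :=
  ⋃ r ∈ S, nfe r

/-- Merge of two pointed items (meaningful when they share the same carrier). -/
def merge : PItem α → PItem α → PItem α
  | ch a, pch _ => pch a
  | plus e1 e2, plus f1 f2 => plus (merge e1 f1) (merge e2 f2)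
  | cat e1 e2, cat f1 f2 => cat (merge e1 f1) (merge e2 f2)
  | star e, star f => star (merge e f)
  | e, _ => e

/-- Merge extended to pres. -/
def mergeP (p q : Pre α) : Pre α := (merge p.1 q.1, p.2 || q.2)

end PItem
end PointedRE

open PointedRE PItem

lemma carrier_broadcast {α : Type} (e : PItem α) : carrier (broadcast e).1 = carrier e := by
  induction e with
  | cat e1 e2 ih1 ih2 =>
      simp only [broadcast]; split <;> simp [carrier, ih1, ih2]
  | _ => simp_all [broadcast, carrier]

lemma ebool_or {α : Type} (x y : Bool) : (ebool (x || y) : Language α) = ebool x + ebool y := by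
  cases x <;> cases y <;> simp [ebool, add_idem]

/-- L_p(•(e)) = L_p(e) ∪ L(|e|). -/
theorem stmt2 {α : Type} (e : PItem α) :
    LpP (broadcast e) = Lp e + (carrier e).matches' := by
  induction e with
  | empty => simp [LpP, broadcast, Lp, carrier, ebool]
  | eps => simp [LpP, broadcast, Lp, carrier, ebool]
  | ch a => simp [LpP, broadcast, Lp, carrier, ebool]
  | pch a => simp [LpP, broadcast, Lp, carrier, ebool, add_idem]
  | plus e1 e2 ih1 ih2 =>
      simp only [LpP, broadcast, Lp, carrier, RegularExpression.matches'_add] at *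
      rw [ebool_or, add_add_add_comm, ih1, ih2, add_add_add_comm]
  | cat e1 e2 ih1 ih2 =>
      by_cases h : (broadcast e1).2
      · simp only [broadcast, h, if_true, LpP, Lp, carrier, ebool,
          RegularExpression.matches'_mul, carrier_broadcast] at *
        set L1 := (carrier e1).matches'
        set L2 := (carrier e2).matches'
        set P1 := Lp (broadcast e1).1
        set P2 := Lp (broadcast e2).1
        calc P1 * L2 + P2 + (if (broadcast e2).2 = true then (1 : Language α) else 0)
            = P1 * L2 + (P2 + (if (broadcast e2).2 = true then 1 else 0)) := by rw [add_assoc]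
          _ = P1 * L2 + (Lp e2 + L2) := by rw [ih2]
          _ = P1 * L2 + 1 * L2 + Lp e2 := by
              rw [one_mul, add_comm (Lp e2) L2, ← add_assoc]
          _ = (P1 + 1) * L2 + Lp e2 := by rw [add_mul]
          _ = (Lp e1 + L1) * L2 + Lp e2 := by rw [ih1]
          _ = Lp e1 * L2 + Lp e2 + L1 * L2 := by rw [add_mul, add_right_comm]
      · simp only [broadcast, h, if_false, LpP, Lp, carrier, ebool, Bool.false_eq_true,
          add_zero, RegularExpression.matches'_mul] at *
        rw [ih1, add_mul, add_right_comm]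
  | star e ih =>
      simp only [broadcast, LpP, Lp, carrier, RegularExpression.matches'_star,
        carrier_broadcast, ebool, if_true] at *
      set L := (carrier e).matches'
      set P := Lp (broadcast e).1
      set Q := (if (broadcast e).2 = true then (1 : Language α) else 0) with hQdef
      have hQ1 : Q + 1 = 1 := by
        rw [hQdef]; by_cases hb : (broadcast e).2 <;> simp [hb, add_idem]
      have hP1 : P + 1 = Lp e + L + 1 := by
        conv_lhs => rw [← hQ1, ← add_assoc]
        rw [ih]
      have hL : L ≤ P + 1 := by
        rw [hP1]; exact le_trans le_add_self le_self_add
      have key : KStar.kstar L ≤ P * KStar.kstar L + 1 := by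
        have hx : (P * KStar.kstar L + 1) * L ≤ P * KStar.kstar L + 1 := by
          rw [add_mul, one_mul]
          have s1 : P * KStar.kstar L * L ≤ P * KStar.kstar L := by
            rw [mul_assoc]; exact mul_le_mul_right kstar_mul_le_kstar _
          refine le_trans (add_le_add s1 hL) ?_
          rw [← add_assoc]
          exact add_le_add_left
            (add_le le_rfl (le_mul_of_one_le_right' one_le_kstar)) 1
        calc KStar.kstar L = 1 * KStar.kstar L := (one_mul _).symm
          _ ≤ (P * KStar.kstar L + 1) * KStar.kstar L := mul_le_mul_left le_add_self _
          _ ≤ P * KStar.kstar L + 1 := mul_kstar_le_self hx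
      have h2 : P * KStar.kstar L + KStar.kstar L = Lp e * KStar.kstar L + KStar.kstar L := by
        have h := congrArg (· * KStar.kstar L) hP1
        simp only [add_mul, one_mul] at h
        rw [h, add_assoc, LE.le.add_eq_right mul_kstar_le_kstar]
      have h3 : P * KStar.kstar L + 1 = P * KStar.kstar L + KStar.kstar L :=
        le_antisymm (add_le_add_right one_le_kstar _) (add_le le_self_add key)
      rw [h3, h2]
end

section
/- For any pointed item e, character a, and string w: w ∈ L_p(move(e,a)) if and only if aw ∈ L_p(e). -/
namespace PointedRE
namespace PItem

open Computability

variable {α : Type}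

lemma ebool_true : (ebool true : Language α) = 1 := rfl
lemma ebool_false : (ebool false : Language α) = 0 := rfl

lemma ebool_or (b c : Bool) : (ebool (b || c) : Language α) = ebool b + ebool c := by
  cases b <;> cases c <;>
    simp [ebool_true, ebool_false, Language.add_def, Set.union_self]

lemma mem_ebool_nil {x : List α} {b : Bool} (h : x ∈ (ebool b : Language α)) : x = [] := by
  cases b
  · exact absurd h (by simp [ebool_false])
  · simpa [ebool_true, Language.mem_one] using h

lemma mem_singleton_lang {x y : List α} : x ∈ ({y} : Language α) ↔ x = y :=
  Set.mem_singleton_iff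

lemma broadcast_carrier (e : PItem α) : carrier (broadcast e).1 = carrier e := by
  induction e with
  | empty => rfl
  | eps => rfl
  | ch a => rfl
  | pch a => rfl
  | plus e1 e2 ih1 ih2 => simp [broadcast, carrier, ih1, ih2]
  | cat e1 e2 ih1 ih2 =>
      by_cases h : (broadcast e1).2 <;> simp [broadcast, h, carrier, ih1, ih2]
  | star e ih => simp [broadcast, carrier, ih]

lemma move_carrier [DecidableEq α] (a : α) (e : PItem α) :
    carrier (move a e).1 = carrier e := by
  induction e with
  | empty => rfl
  | eps => rfl
  | ch b => rfl
  | pch b => by_cases h : b = a <;> simp [move, h, carrier]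
  | plus e1 e2 ih1 ih2 => simp [move, oplus, carrier, ih1, ih2]
  | cat e1 e2 ih1 ih2 =>
      by_cases h : (move a e1).2 <;>
        simp [move, odot, h, carrier, ih1, ih2, broadcast_carrier]
  | star e ih =>
      by_cases h : (move a e).2 <;>
        simp [move, ostar, h, carrier, ih, broadcast_carrier]

lemma nil_not_mem_Lp (e : PItem α) : [] ∉ Lp e := by
  induction e with
  | empty => simp [Lp]
  | eps => simp [Lp]
  | ch a => simp [Lp]
  | pch a =>
      intro h
      exact absurd (mem_singleton_lang.1 h) (by simp)
  | plus e1 e2 ih1 ih2 =>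
      intro h
      rcases (Language.mem_add _ _ _).1 h with h | h
      · exact ih1 h
      · exact ih2 h
  | cat e1 e2 ih1 ih2 =>
      intro h
      rcases (Language.mem_add _ _ _).1 h with h | h
      · rcases Language.mem_mul.1 h with ⟨u, hu, v, hv, huv⟩
        obtain ⟨rfl, rfl⟩ := List.append_eq_nil_iff.1 huv
        exact ih1 hu
      · exact ih2 h
  | star e ih =>
      intro h
      rcases Language.mem_mul.1 h with ⟨u, hu, v, hv, huv⟩
      obtain ⟨rfl, -⟩ := List.append_eq_nil_iff.1 huv
      exact ih hu

/-- Key lemma about Kleene star used for the `star` cases. -/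
lemma star_key {L M N : Language α} {b : Bool}
    (h : M + ebool b = L + N) (hN : ([] : List α) ∉ N) :
    M * L∗ + 1 = L∗ + N * L∗ := by
  have hML : ∀ x ∈ M, x ∈ L ∨ x ∈ N := by
    intro x hx
    have hx' : x ∈ L + N := by
      rw [← h]
      exact (Language.mem_add _ _ _).2 (Or.inl hx)
    exact (Language.mem_add _ _ _).1 hx'
  have hLM : ∀ x ∈ L, x ≠ ([] : List α) → x ∈ M := by
    intro x hx hne
    have hx' : x ∈ M + ebool b := by
      rw [h]; exact (Language.mem_add _ _ _).2 (Or.inl hx)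
    rcases (Language.mem_add _ _ _).1 hx' with h' | h'
    · exact h'
    · exact absurd (mem_ebool_nil h') hne
  have hNM : ∀ x ∈ N, x ∈ M := by
    intro x hx
    have hx' : x ∈ M + ebool b := by
      rw [h]; exact (Language.mem_add _ _ _).2 (Or.inr hx)
    rcases (Language.mem_add _ _ _).1 hx' with h' | h'
    · exact h'
    · exact absurd hx ((mem_ebool_nil h') ▸ hN)
  ext x
  rw [Language.mem_add, Language.mem_add]
  constructor
  · rintro (hx | hx)
    · rcases Language.mem_mul.1 hx with ⟨u, hu, v, hv, rfl⟩
      rcases hML u hu with h' | h'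
      · left
        rcases Language.mem_kstar.1 hv with ⟨S, rfl, hS⟩
        exact Language.mem_kstar.2 ⟨u :: S, rfl, by
          intro y hy
          rcases List.mem_cons.1 hy with rfl | hy
          · exact h'
          · exact hS y hy⟩
      · right
        exact Language.append_mem_mul h' hv
    · left
      rw [Language.mem_one] at hx
      subst hx
      exact Language.nil_mem_kstar L
  · rintro (hx | hx)
    · rcases Language.mem_kstar_iff_exists_nonempty.1 hx with ⟨S, rfl, hS⟩
      cases S with
      | nil => right; simp [Language.mem_one]
      | cons u T =>
          left
          have hu := hS u List.mem_cons_self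
          have hT : T.flatten ∈ L∗ :=
            Language.mem_kstar_iff_exists_nonempty.2
              ⟨T, rfl, fun y hy => hS y (List.mem_cons_of_mem _ hy)⟩
          exact Language.append_mem_mul (hLM u hu.1 hu.2) hT
    · rcases Language.mem_mul.1 hx with ⟨u, hu, v, hv, rfl⟩
      left
      exact Language.append_mem_mul (hNM u hu) hv

lemma broadcast_Lp (e : PItem α) :
    Lp (broadcast e).1 + ebool (broadcast e).2 = (carrier e).matches' + Lp e := by
  induction e with
  | empty =>
      simp [broadcast, Lp, carrier, ebool_false, RegularExpression.matches'_zero]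
  | eps =>
      simp [broadcast, Lp, carrier, ebool_true, RegularExpression.matches'_epsilon]
  | ch a =>
      simp [broadcast, Lp, carrier, ebool_false, RegularExpression.matches'_char]
  | pch a =>
      simp [broadcast, Lp, carrier, ebool_false, RegularExpression.matches'_char,
        Language.add_def, Set.union_self]
  | plus e1 e2 ih1 ih2 =>
      simp only [broadcast, Lp, carrier, ebool_or, RegularExpression.matches'_add]
      calc Lp (broadcast e1).1 + Lp (broadcast e2).1 +
            (ebool (broadcast e1).2 + ebool (broadcast e2).2)
          = (Lp (broadcast e1).1 + ebool (broadcast e1).2) +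
            (Lp (broadcast e2).1 + ebool (broadcast e2).2) := by abel
        _ = ((carrier e1).matches' + Lp e1) + ((carrier e2).matches' + Lp e2) := by
            rw [ih1, ih2]
        _ = (carrier e1).matches' + (carrier e2).matches' + (Lp e1 + Lp e2) := by abel
  | cat e1 e2 ih1 ih2 =>
      by_cases h : (broadcast e1).2
      · rw [h, ebool_true] at ih1
        simp only [broadcast, h, if_true, Lp, carrier, broadcast_carrier,
          RegularExpression.matches'_mul]
        calc Lp (broadcast e1).1 * (carrier e2).matches' + Lp (broadcast e2).1
              + ebool (broadcast e2).2
            = Lp (broadcast e1).1 * (carrier e2).matches'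
              + (Lp (broadcast e2).1 + ebool (broadcast e2).2) := by abel
          _ = Lp (broadcast e1).1 * (carrier e2).matches'
              + ((carrier e2).matches' + Lp e2) := by rw [ih2]
          _ = (Lp (broadcast e1).1 + 1) * (carrier e2).matches' + Lp e2 := by
              rw [add_mul, one_mul]; abel
          _ = ((carrier e1).matches' + Lp e1) * (carrier e2).matches' + Lp e2 := by
              rw [ih1]
          _ = (carrier e1).matches' * (carrier e2).matches'
              + (Lp e1 * (carrier e2).matches' + Lp e2) := by rw [add_mul]; abel
      · simp only [Bool.not_eq_true] at h
        rw [h, ebool_false, add_zero] at ih1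
        simp only [broadcast, h, Bool.false_eq_true, if_false, Lp, carrier, broadcast_carrier,
          RegularExpression.matches'_mul, ebool_false, add_zero]
        rw [ih1, add_mul]
        abel
  | star e ih =>
      simp only [broadcast, Lp, carrier, broadcast_carrier, ebool_true,
        RegularExpression.matches'_star]
      exact star_key ih (nil_not_mem_Lp e)

lemma cons_mem_mul {P Q : Language α} (hP : ([] : List α) ∉ P) (a : α) (w : List α) :
    a :: w ∈ P * Q ↔ ∃ u v, w = u ++ v ∧ a :: u ∈ P ∧ v ∈ Q := by
  rw [Language.mem_mul]
  constructor
  · rintro ⟨u, hu, v, hv, huv⟩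
    cases u with
    | nil => exact absurd hu hP
    | cons b u' =>
        rw [List.cons_append] at huv
        obtain ⟨rfl, rfl⟩ := List.cons.inj huv
        exact ⟨u', v, rfl, hu, hv⟩
  · rintro ⟨u, v, rfl, hu, hv⟩
    exact ⟨a :: u, hu, v, hv, rfl⟩

lemma LpP_oplus (p q : Pre α) : LpP (oplus p q) = LpP p + LpP q := by
  simp only [LpP, oplus, Lp, ebool_or]
  abel

lemma LpP_odot (p q : Pre α) :
    LpP (odot p q) = LpP p * (carrier q.1).matches' + LpP q := by
  by_cases h : p.2
  · simp only [LpP, odot, h, if_true, Lp, ebool_or, broadcast_carrier, ebool_true]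
    calc Lp p.1 * (carrier q.1).matches' + Lp (broadcast q.1).1
          + (ebool q.2 + ebool (broadcast q.1).2)
        = Lp p.1 * (carrier q.1).matches'
          + (Lp (broadcast q.1).1 + ebool (broadcast q.1).2) + ebool q.2 := by abel
      _ = Lp p.1 * (carrier q.1).matches'
          + ((carrier q.1).matches' + Lp q.1) + ebool q.2 := by rw [broadcast_Lp]
      _ = (Lp p.1 + 1) * (carrier q.1).matches' + (Lp q.1 + ebool q.2) := by
          rw [add_mul, one_mul]; abel
  · simp only [Bool.not_eq_true] at h
    simp only [LpP, odot, h, if_false, Lp, Bool.false_eq_true, ebool_false, add_zero]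
    abel

lemma LpP_ostar (p : Pre α) :
    LpP (ostar p) = LpP p * (carrier p.1).matches'∗ := by
  by_cases h : p.2
  · simp only [LpP, ostar, h, if_true, Lp, broadcast_carrier, ebool_true]
    rw [add_mul, one_mul]
    have := star_key (broadcast_Lp p.1) (nil_not_mem_Lp p.1)
    rw [this]
    abel
  · simp only [Bool.not_eq_true] at h
    simp only [LpP, ostar, h, if_false, Lp, Bool.false_eq_true, ebool_false, add_zero]

lemma mem_LpP_move [DecidableEq α] (a : α) (e : PItem α) :
    ∀ w : List α, w ∈ LpP (move a e) ↔ (a :: w) ∈ Lp e := by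
  induction e with
  | empty =>
      intro w
      simp [move, LpP, Lp, ebool_false]
  | eps =>
      intro w
      simp [move, LpP, Lp, ebool_false]
  | ch b =>
      intro w
      simp [move, LpP, Lp, ebool_false]
  | pch b =>
      intro w
      by_cases h : b = a
      · subst h
        simp [move, LpP, Lp, ebool_true, Language.mem_add, Language.mem_one,
          mem_singleton_lang]
      · simp [move, h, LpP, Lp, ebool_false, mem_singleton_lang, List.cons.injEq,
          Ne.symm h]
  | plus e1 e2 ih1 ih2 =>
      intro w
      rw [move, LpP_oplus, Language.mem_add, ih1 w, ih2 w, Lp, Language.mem_add]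
  | cat e1 e2 ih1 ih2 =>
      intro w
      rw [move, LpP_odot, Language.mem_add, move_carrier, Lp, Language.mem_add,
        cons_mem_mul (nil_not_mem_Lp e1)]
      constructor
      · rintro (hx | hx)
        · rcases Language.mem_mul.1 hx with ⟨u, hu, v, hv, rfl⟩
          exact Or.inl ⟨u, v, rfl, (ih1 u).1 hu, hv⟩
        · exact Or.inr ((ih2 w).1 hx)
      · rintro (⟨u, v, rfl, hu, hv⟩ | hx)
        · exact Or.inl (Language.append_mem_mul ((ih1 u).2 hu) hv)
        · exact Or.inr ((ih2 w).2 hx)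
  | star e ih =>
      intro w
      rw [move, LpP_ostar, move_carrier, Lp,
        cons_mem_mul (nil_not_mem_Lp e), Language.mem_mul]
      constructor
      · rintro ⟨u, hu, v, hv, rfl⟩
        exact ⟨u, v, rfl, (ih u).1 hu, hv⟩
      · rintro ⟨u, v, rfl, hu, hv⟩
        exact ⟨u, (ih u).2 hu, v, hv, rfl⟩

end PItem
end PointedRE

open PointedRE PItem

/-- w ∈ L_p(move(e,a)) iff aw ∈ L_p(e). -/
theorem stmt10 {α : Type} [DecidableEq α] (e : PItem α) (a : α) (w : List α) :
    w ∈ LpP (move a e) ↔ (a :: w) ∈ Lp e := by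
  exact mem_LpP_move a e w
end

section
/- For any pointed item e, L(R(e)) = L_p(e), where R is the read-back function associating to each pointed item a set of regular expressions. -/
open PointedRE PItem

namespace PointedRE
namespace PItem

variable {α : Type}

lemma LS_empty : LS (∅ : Set (RegularExpression α)) = 0 := by
  ext w; simp [LS]; exact id

lemma LS_union (S T : Set (RegularExpression α)) : LS (S ∪ T) = LS S + LS T := by
  ext w
  simp only [LS, Set.mem_setOf_eq, Set.mem_union, Language.mem_add]
  constructor
  · rintro ⟨r, h | h, hm⟩
    · exact Or.inl ⟨r, h, hm⟩
    · exact Or.inr ⟨r, h, hm⟩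
  · rintro (⟨r, h, hm⟩ | ⟨r, h, hm⟩)
    · exact ⟨r, Or.inl h, hm⟩
    · exact ⟨r, Or.inr h, hm⟩

lemma LS_singleton (r : RegularExpression α) : LS ({r} : Set (RegularExpression α)) = r.matches' := by
  ext w; simp only [LS, Set.mem_setOf_eq, Set.mem_singleton_iff, exists_eq_left]; exact Iff.rfl

lemma LS_image_mul (S : Set (RegularExpression α)) (f : RegularExpression α) :
    LS ((fun r => r * f) '' S) = LS S * f.matches' := by
  ext w
  simp only [LS, Set.mem_setOf_eq, Set.mem_image, Language.mem_mul]
  constructor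
  · rintro ⟨r, ⟨s, hs, rfl⟩, hm⟩
    rw [RegularExpression.matches'_mul] at hm
    obtain ⟨a, ha, b, hb, hab⟩ := hm
    exact ⟨a, ⟨s, hs, ha⟩, b, hb, hab⟩
  · rintro ⟨a, ⟨s, hs, ha⟩, b, hb, hab⟩
    exact ⟨s * f, ⟨s, hs, rfl⟩, by
      rw [RegularExpression.matches'_mul]; exact ⟨a, ha, b, hb, hab⟩⟩

end PItem
end PointedRE

/-- L(R(e)) = L_p(e). -/
theorem stmt13 {α : Type} (e : PItem α) :
    LS (R e) = Lp e := by
  induction e with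
  | empty => simpa [R, Lp] using LS_empty
  | eps => simpa [R, Lp] using LS_empty
  | ch a => simpa [R, Lp] using LS_empty
  | pch a => simp [R, Lp, LS_singleton]
  | plus e1 e2 ih1 ih2 => simp [R, Lp, LS_union, ih1, ih2]
  | cat e1 e2 ih1 ih2 => simp [R, Lp, LS_union, LS_image_mul, ih1, ih2]
  | star e ih =>
      simp only [R, Lp, LS_image_mul, ih]
      rw [RegularExpression.matches'_star]
end
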